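/- arXiv:2302.12430 — 6 statements merged into one kernel-verified Lean document; each statement's English description precedes it below -/
import Mathlib

section
/- If ⟨K_1, …, K_r⟩ is a collectively (r,s)-unavoidable family of simplicial complexes on Fin m with each K_i (m,k)-balanced, then the Kneser-type graph Γ(K) contains no clique on r − s + 1 vertices; equivalently, there do not exist r − s + 1 distinct indices i_1, …, i_{r−s+1} in Fin r and pairwise disjoint finsets A_1, …, A_{r−s+1} of Fin m with |A_l| = k+1 and A_l ∉ K_{i_l} for every l. -/
/-- `K` is an abstract simplicial complex on `Fin m`. -/
def IsSimplicialComplex {m : ℕ} (K : Set (Finset (Fin m))) : Prop :=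
  ∀ A ∈ K, ∀ B ⊆ A, B ∈ K

/-- `A` is rainbow w.r.t. the coloring `c`: `c` is injective on `A`. -/
def IsRainbow {m k : ℕ} (c : Fin m → Fin (k + 1)) (A : Finset (Fin m)) : Prop :=
  Set.InjOn c ↑A

/-- `K` is `(m,k)`-rainbow balanced w.r.t. `c`. -/
def IsRainbowBalanced {m k : ℕ} (c : Fin m → Fin (k + 1)) (K : Set (Finset (Fin m))) : Prop :=
  (∀ A : Finset (Fin m), IsRainbow c A → A.card ≤ k → A ∈ K) ∧ ∀ A ∈ K, IsRainbow c A

/-- `K` is `(m,k)`-balanced. -/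
def IsBalanced {m : ℕ} (k : ℕ) (K : Set (Finset (Fin m))) : Prop :=
  (∀ A : Finset (Fin m), A.card ≤ k → A ∈ K) ∧ ∀ A ∈ K, A.card ≤ k + 1

/-- The family `K` is collectively `(r,s)`-unavoidable. -/
def CollectivelyUnavoidable {m : ℕ} (r s : ℕ) (K : Fin r → Set (Finset (Fin m))) : Prop :=
  ∀ A : Fin r → Finset (Fin m), (∀ i j, i ≠ j → Disjoint (A i) (A j)) →
    ∃ I : Finset (Fin r), I.card = s ∧ ∀ i ∈ I, A i ∈ K i

/-- The family `K` is collectively `(r,s)`-rainbow unavoidable w.r.t. `c`. -/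
def CollectivelyRainbowUnavoidable {m k : ℕ} (c : Fin m → Fin (k + 1)) (r s : ℕ)
    (K : Fin r → Set (Finset (Fin m))) : Prop :=
  ∀ A : Fin r → Finset (Fin m), (∀ i j, i ≠ j → Disjoint (A i) (A j)) →
    (∀ i, IsRainbow c (A i)) →
    ∃ I : Finset (Fin r), I.card = s ∧ ∀ i ∈ I, A i ∈ K i

/-- The face of the standard simplex spanned by the vertex set `A`. -/
def simplexFace {m : ℕ} (A : Finset (Fin m)) : Set (stdSimplex ℝ (Fin m)) :=
  {x | Function.support (x : Fin m → ℝ) ⊆ ↑A}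

/-- **`(r,s)`-unavoidability forbids cliques of size `r - s + 1` in the Kneser-type graph.** -/
theorem unavoidable_no_clique
    (m r s k : ℕ)
    (K : Fin r → Set (Finset (Fin m)))
    (hcomplex : ∀ i, IsSimplicialComplex (K i))
    (hbal : ∀ i, IsBalanced k (K i))
    (hunav : CollectivelyUnavoidable r s K) :
    ¬ ∃ (ι : Fin (r - s + 1) → Fin r) (A : Fin (r - s + 1) → Finset (Fin m)),
        Function.Injective ι ∧
        (∀ l, (A l).card = k + 1 ∧ A l ∉ K (ι l)) ∧
        (∀ l l', l ≠ l' → Disjoint (A l) (A l')) := by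
  rintro ⟨ι, A, hinj, hA, hdisj⟩
  classical
  set B : Fin r → Finset (Fin m) := fun i =>
    if h : ∃ l, ι l = i then A h.choose else ∅ with hB
  have hBι : ∀ l, B (ι l) = A l := by
    intro l
    have h : ∃ l', ι l' = ι l := ⟨l, rfl⟩
    have := h.choose_spec
    simp only [hB, dif_pos h, hinj this]
  have hdisjB : ∀ i j, i ≠ j → Disjoint (B i) (B j) := by
    intro i j hij
    by_cases hi : ∃ l, ι l = i
    · by_cases hj : ∃ l', ι l' = j
      · simp only [hB, dif_pos hi, dif_pos hj]
        apply hdisj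
        intro h; apply hij
        rw [← hi.choose_spec, ← hj.choose_spec, h]
      · simp [hB, dif_neg hj]
    · simp [hB, dif_neg hi]
  obtain ⟨I, hIcard, hI⟩ := hunav B hdisjB
  have hIim : Disjoint I (Finset.univ.image ι) := by
    rw [Finset.disjoint_right]
    intro i hi hiI
    obtain ⟨l, -, rfl⟩ := Finset.mem_image.mp hi
    have := hI _ hiI
    rw [hBι] at this
    exact (hA l).2 this
  have hcard : (I ∪ Finset.univ.image ι).card ≤ r := by
    simpa using Finset.card_le_univ (I ∪ Finset.univ.image ι)
  rw [Finset.card_union_of_disjoint hIim, hIcard,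
    Finset.card_image_of_injective _ hinj, Finset.card_univ, Fintype.card_fin] at hcard
  omega
end

section
/- The converse of the clique criterion fails in the balanced setting: let r ≥ 1, 0 < s ≤ r, k ≥ 0 and m > (k+2)(r−s+1), and let K_i for i = 1, …, r all equal the full k-skeleton of the simplex on Fin m, i.e., K_i = {A ⊆ Fin m : |A| ≤ k+1}. Then each K_i is (m,k)-balanced, the Kneser-type graph Γ(K) has no vertices (hence no clique on r−s+1 vertices), but the family ⟨K_1, …, K_r⟩ is NOT collectively (r,s)-unavoidable: there exist pairwise disjoint finsets A_1, …, A_r of Fin m with |A_i| = k+2 for i = 1, …, r−s+1 and A_i = ∅ for i = r−s+2, …, r, and fewer than s indices i satisfy A_i ∈ K_i. -/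
/-- **The converse of the clique criterion fails in the balanced setting.** -/
theorem clique_criterion_converse_fails
    (r s k m : ℕ) (hr : 1 ≤ r) (hs : 0 < s) (hsr : s ≤ r)
    (hm : m > (k + 2) * (r - s + 1))
    (K : Fin r → Set (Finset (Fin m)))
    (hK : ∀ i, K i = {A : Finset (Fin m) | A.card ≤ k + 1}) :
    (∀ i, IsBalanced k (K i)) ∧
    (∀ (i : Fin r) (A : Finset (Fin m)), A.card = k + 1 → A ∈ K i) ∧
    ¬ CollectivelyUnavoidable r s K ∧
    ∃ A : Fin r → Finset (Fin m),
      (∀ i j, i ≠ j → Disjoint (A i) (A j)) ∧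
      (∀ i : Fin r, (i : ℕ) < r - s + 1 → (A i).card = k + 2) ∧
      (∀ i : Fin r, r - s + 1 ≤ (i : ℕ) → A i = ∅) ∧
      (∀ I : Finset (Fin r), (∀ i ∈ I, A i ∈ K i) → I.card < s) := by
  classical
  set A : Fin r → Finset (Fin m) := fun i =>
    if h : (i : ℕ) < r - s + 1 then
      (Finset.Ico ((k+2)*(i:ℕ)) ((k+2)*((i:ℕ)+1))).attachFin (fun n hn => by
        rw [Finset.mem_Ico] at hn
        have h2 : (k+2)*((i:ℕ)+1) ≤ (k+2)*(r-s+1) := Nat.mul_le_mul_left _ (by omega)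
        omega)
    else ∅ with hA
  have hAcard : ∀ i : Fin r, (i : ℕ) < r - s + 1 → (A i).card = k + 2 := by
    intro i hi
    simp only [hA, dif_pos hi, Finset.card_attachFin, Nat.card_Ico]
    ring_nf
    omega
  have hAempty : ∀ i : Fin r, r - s + 1 ≤ (i : ℕ) → A i = ∅ := by
    intro i hi
    simp only [hA, dif_neg (by omega : ¬ (i : ℕ) < r - s + 1)]
  have hdisj : ∀ i j, i ≠ j → Disjoint (A i) (A j) := by
    intro i j hij
    by_cases hi : (i : ℕ) < r - s + 1
    · by_cases hj : (j : ℕ) < r - s + 1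
      · rw [Finset.disjoint_left]
        intro a hai haj
        simp only [hA, dif_pos hi, dif_pos hj, Finset.mem_attachFin, Finset.mem_Ico] at hai haj
        have hne : (i : ℕ) ≠ (j : ℕ) := fun h => hij (Fin.ext h)
        rcases Nat.lt_or_ge (i : ℕ) (j : ℕ) with h | h
        · have := Nat.mul_le_mul_left (k+2) (show (i:ℕ)+1 ≤ (j:ℕ) from h)
          omega
        · have : (j : ℕ) < (i : ℕ) := by omega
          have := Nat.mul_le_mul_left (k+2) (show (j:ℕ)+1 ≤ (i:ℕ) from this)
          omega
      · rw [hAempty j (by omega)]; simp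
    · rw [hAempty i (by omega)]; simp
  have hI : ∀ I : Finset (Fin r), (∀ i ∈ I, A i ∈ K i) → I.card < s := by
    intro I hIK
    have hsub : ∀ i ∈ I, r - s + 1 ≤ (i : ℕ) := by
      intro i hi
      by_contra h
      push_neg at h
      have h2 := hIK i hi
      rw [hK] at h2
      have h3 : (A i).card ≤ k + 1 := h2
      rw [hAcard i h] at h3
      omega
    have hcard : I.card ≤ r - (r - s + 1) := by
      calc I.card = (I.image Fin.val).card :=
            (Finset.card_image_of_injective _ Fin.val_injective).symm
        _ ≤ (Finset.Ico (r-s+1) r).card := by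
            apply Finset.card_le_card
            intro n hn
            simp only [Finset.mem_image] at hn
            obtain ⟨i, hi, rfl⟩ := hn
            rw [Finset.mem_Ico]
            exact ⟨hsub i hi, i.isLt⟩
        _ = r - (r - s + 1) := Nat.card_Ico _ _
    omega
  refine ⟨?_, ?_, ?_, A, hdisj, hAcard, hAempty, hI⟩
  · intro i
    rw [hK]
    exact ⟨fun B hB => Nat.le_succ_of_le hB, fun B hB => hB⟩
  · intro i B hB
    rw [hK]
    exact le_of_eq hB
  · intro h
    obtain ⟨I, hIcard, hIK⟩ := h A hdisj
    have := hI I hIK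
    omega
end

section
/- Clique criterion in the rainbow setting: let c : Fin m → Fin (k+1) be a coloring and let ⟨K_1, …, K_r⟩ be a family of simplicial complexes on Fin m with each K_i (m,k)-rainbow balanced with respect to c. If the rainbow Kneser-type graph Γ(K) contains no clique on r − s + 1 vertices, then ⟨K_1, …, K_r⟩ is collectively (r,s)-rainbow unavoidable. -/
/-- **Clique criterion in the rainbow setting:** no `(r-s+1)`-clique in the rainbow
Kneser-type graph implies collective `(r,s)`-rainbow unavoidability. -/
theorem rainbow_no_clique_implies_unavoidable
    (m r s k : ℕ) (hs : 0 < s) (hsr : s ≤ r)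
    (c : Fin m → Fin (k + 1))
    (K : Fin r → Set (Finset (Fin m)))
    (hcomplex : ∀ i, IsSimplicialComplex (K i))
    (hbal : ∀ i, IsRainbowBalanced c (K i))
    (hnoclique : ¬ ∃ (ι : Fin (r - s + 1) → Fin r) (A : Fin (r - s + 1) → Finset (Fin m)),
        Function.Injective ι ∧
        (∀ l, IsRainbow c (A l) ∧ (A l).card = k + 1 ∧ A l ∉ K (ι l)) ∧
        (∀ l l', l ≠ l' → Disjoint (A l) (A l'))) :
    CollectivelyRainbowUnavoidable c r s K := by
  intro A hdisj hrain
  classical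
  set B : Finset (Fin r) := Finset.univ.filter (fun i => A i ∉ K i) with hB
  -- each bad index has card k+1
  have hcard : ∀ i ∈ B, (A i).card = k + 1 := by
    intro i hi
    simp only [hB, Finset.mem_filter] at hi
    have hle : (A i).card ≤ k + 1 := by
      have := Finset.card_le_card_of_injOn c (fun x _ => Finset.mem_univ (c x)) (hrain i)
      simpa using this
    have hgt : ¬ (A i).card ≤ k := fun h => hi.2 ((hbal i).1 (A i) (hrain i) h)
    omega
  have hBcard : B.card ≤ r - s := by
    by_contra h
    push_neg at h
    have h' : r - s + 1 ≤ B.card := h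
    obtain ⟨B', hB'sub, hB'card⟩ := Finset.exists_subset_card_eq h'
    apply hnoclique
    refine ⟨fun l => (B'.orderIsoOfFin hB'card l : Fin r), fun l => A (B'.orderIsoOfFin hB'card l : Fin r), ?_, ?_, ?_⟩
    · intro a b hab
      exact (B'.orderIsoOfFin hB'card).injective (Subtype.ext hab)
    · intro l
      have hmem : ((B'.orderIsoOfFin hB'card l : Fin r)) ∈ B :=
        hB'sub (B'.orderIsoOfFin hB'card l).2
      refine ⟨hrain _, hcard _ hmem, ?_⟩
      simp only [hB, Finset.mem_filter] at hmem
      exact hmem.2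
    · intro l l' hll'
      apply hdisj
      intro heq
      exact hll' ((B'.orderIsoOfFin hB'card).injective (Subtype.ext heq))
  -- good indices
  set G : Finset (Fin r) := Finset.univ.filter (fun i => A i ∈ K i) with hG
  have hGB : G.card + B.card = r := by
    have := Finset.card_filter_add_card_filter_not
      (s := (Finset.univ : Finset (Fin r))) (p := fun i => A i ∈ K i)
    simpa [hG, hB] using this
  have hGcard : s ≤ G.card := by omega
  obtain ⟨I, hIsub, hIcard⟩ := Finset.exists_subset_card_eq hGcard
  refine ⟨I, hIcard, fun i hi => ?_⟩
  have := hIsub hi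
  simp only [hG, Finset.mem_filter] at this
  exact this.2
end

section
/- Tverberg's theorem: Let r ≥ 1 and d ≥ 1 be integers and m ≥ (r−1)(d+1) + 1. Then any finite set S of m points in ℝ^d can be partitioned into r nonempty pairwise disjoint subsets S_1, …, S_r such that ⋂_{i=1}^r convexHull(S_i) ≠ ∅. -/
open Metric Finset Module
open scoped RealInnerProductSpace

lemma exists_inner_nonpos {E : Type*} [NormedAddCommGroup E] [InnerProductSpace ℝ E]
    {s : Set E} (hs : (0:E) ∈ convexHull ℝ s) (x : E) : ∃ y ∈ s, (⟪x, y⟫) ≤ 0 := by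
  by_contra h
  push_neg at h
  have hconv : Convex ℝ {v : E | 0 < ⟪x, v⟫} :=
    convex_halfSpace_gt ⟨fun a b => inner_add_right x a b, fun c a => real_inner_smul_right x a c⟩ 0
  have := convexHull_min (fun y hy => h y hy) hconv hs
  have h0 : (0:ℝ) < ⟪x, (0:E)⟫ := this
  simp at h0

lemma colorful_caratheodory {E : Type*} [NormedAddCommGroup E] [InnerProductSpace ℝ E]
    [FiniteDimensional ℝ E] {n : ℕ} (hn : finrank ℝ E < n)
    {ι : Type*} [Fintype ι] [Nonempty ι] (b : Fin n → ι → E)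
    (hb : ∀ j, (0:E) ∈ convexHull ℝ (Set.range (b j))) :
    ∃ σ : Fin n → ι, (0:E) ∈ convexHull ℝ (Set.range fun j => b j (σ j)) := by
  classical
  have hn0 : 0 < n := Nat.pos_of_ne_zero (by rintro rfl; exact Nat.not_lt_zero _ hn)
  haveI : NeZero n := ⟨hn0.ne'⟩
  -- minimize distance over all selections
  obtain ⟨σ₀, hσ₀⟩ := Finite.exists_min
    (fun σ : Fin n → ι => infDist 0 (convexHull ℝ (Set.range fun j => b j (σ j))))
  set K := convexHull ℝ (Set.range fun j => b j (σ₀ j)) with hK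
  have hKne : K.Nonempty := (Set.range_nonempty _).convexHull
  have hKcp : IsCompact K := (Set.finite_range _).isCompact_convexHull ℝ
  obtain ⟨x, hxK, hxd⟩ := hKcp.exists_infDist_eq_dist hKne 0
  by_cases hx0 : x = 0
  · exact ⟨σ₀, hx0 ▸ hxK⟩
  -- the supporting halfspace property
  have key : ∀ w ∈ K, (⟪x, x⟫) ≤ ⟪x, w⟫ := by
    have h1 : ‖(0:E) - x‖ = ⨅ w : K, ‖(0:E) - w‖ := by
      have : ∀ w : K, ‖(0:E) - w‖ = dist 0 (w:E) := fun w => (dist_eq_norm _ _).symm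
      rw [show (⨅ w : K, ‖(0:E) - w‖) = ⨅ w : K, dist 0 (w:E) from by simp [this]]
      rw [← Metric.infDist_eq_iInf, hxd, dist_eq_norm]
    have h2 := (norm_eq_iInf_iff_real_inner_le_zero (convex_convexHull ℝ _) hxK).mp h1
    intro w hw
    have := h2 w hw
    rw [zero_sub, inner_sub_right, inner_neg_left, inner_neg_left] at this
    linarith
  exfalso
  set g : Fin n → E := fun j => b j (σ₀ j) with hg
  have hxK' : x ∈ convexHull ℝ (Set.range g) := hxK
  rw [convexHull_range_eq_exists_affineCombination] at hxK'
  obtain ⟨s, lam, hlam0, hlam1, hlamx⟩ := hxK'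
  rw [Finset.affineCombination_eq_linear_combination _ _ _ hlam1] at hlamx
  set J : Finset (Fin n) := s.filter (fun j => lam j ≠ 0) with hJdef
  have hJ0 : ∀ j ∈ J, 0 < lam j := by
    intro j hj
    rcases Finset.mem_filter.mp hj with ⟨hjs, hne⟩
    exact lt_of_le_of_ne (hlam0 j hjs) (Ne.symm hne)
  have hJ1 : ∑ j ∈ J, lam j = 1 := by
    rw [← hlam1]; exact Finset.sum_filter_ne_zero s
  have hJx : ∑ j ∈ J, lam j • g j = x := by
    rw [← hlamx]
    apply Finset.sum_subset (Finset.filter_subset _ _)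
    intro j hjs hjn
    have : lam j = 0 := by
      by_contra hne
      exact hjn (Finset.mem_filter.mpr ⟨hjs, hne⟩)
    simp [this]
  have hium : ∀ j ∈ J, (⟪x, g j⟫) = ⟪x, x⟫ := by
    have hsum : ∑ j ∈ J, lam j * ((⟪x, g j⟫) - ⟪x, x⟫) = 0 := by
      have h1 : (⟪x, ∑ j ∈ J, lam j • g j⟫) = ∑ j ∈ J, lam j * ⟪x, g j⟫ := by
        rw [inner_sum]
        exact Finset.sum_congr rfl fun j _ => real_inner_smul_right x (g j) (lam j)
      rw [hJx] at h1
      have h2 : ∑ j ∈ J, lam j * (⟪x, x⟫) = ⟪x, x⟫ := by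
        rw [← Finset.sum_mul, hJ1, one_mul]
      calc ∑ j ∈ J, lam j * ((⟪x, g j⟫) - ⟪x, x⟫)
          = (∑ j ∈ J, lam j * ⟪x, g j⟫) - ∑ j ∈ J, lam j * ⟪x, x⟫ := by
            rw [← Finset.sum_sub_distrib]; exact Finset.sum_congr rfl fun j _ => by ring
        _ = 0 := by rw [← h1, h2, sub_self]
    intro j hj
    have hterm : lam j * ((⟪x, g j⟫) - ⟪x, x⟫) = 0 := by
      have hnn : ∀ i ∈ J, 0 ≤ lam i * ((⟪x, g i⟫) - ⟪x, x⟫) := by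
        intro i hi
        have : (⟪x, x⟫) ≤ ⟪x, g i⟫ := key (g i) (subset_convexHull ℝ _ ⟨i, rfl⟩)
        have h0 := (hJ0 i hi).le
        nlinarith
      exact (Finset.sum_eq_zero_iff_of_nonneg hnn).mp hsum j hj
    have := (hJ0 j hj).ne'
    rcases mul_eq_zero.mp hterm with h | h
    · exact absurd h this
    · linarith [sub_eq_zero.mp h]
  have hxJ : x ∈ convexHull ℝ (g '' (J : Set (Fin n))) := by
    have hmem := J.centerMass_mem_convexHull (fun j hj => (hJ0 j hj).le)
      (by rw [hJ1]; norm_num)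
      (fun j hj => Set.mem_image_of_mem g (Finset.mem_coe.mpr hj))
    rwa [Finset.centerMass_eq_of_sum_1 _ _ hJ1, hJx] at hmem
  rw [convexHull_eq_union] at hxJ
  simp only [Set.mem_iUnion] at hxJ
  obtain ⟨t, hts, hai, hxt⟩ := hxJ
  have hxx : (0:ℝ) < ⟪x, x⟫ :=
    lt_of_le_of_ne real_inner_self_nonneg
      (fun h => hx0 (inner_self_eq_zero.mp h.symm))
  -- cardinality bound via the supporting hyperplane
  have hcard : t.card ≤ finrank ℝ E := by
    rcases Finset.eq_empty_or_nonempty t with rfl | htne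
    · simp
    set f : E →ₗ[ℝ] ℝ :=
      { toFun := fun v => ⟪x, v⟫,
        map_add' := fun a c => inner_add_right x a c,
        map_smul' := fun c a => real_inner_smul_right x a c } with hf
    have hinner : ∀ y ∈ (t : Set E), (⟪x, y⟫) = ⟪x, x⟫ := by
      intro y hy
      obtain ⟨j, hj, rfl⟩ := hts hy
      exact hium j hj
    have hker : vectorSpan ℝ (t : Set E) ≤ LinearMap.ker f := by
      rw [vectorSpan_def, Submodule.span_le]
      rintro u ⟨y, hy, z, hz, rfl⟩
      have hy' := hinner y hy
      have hz' := hinner z hz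
      simp only [SetLike.mem_coe, LinearMap.mem_ker, hf, LinearMap.coe_mk, AddHom.coe_mk,
        vsub_eq_sub, inner_sub_right]
      rw [hy', hz', sub_self]
    have hklt : finrank ℝ (LinearMap.ker f) < finrank ℝ E := by
      apply Submodule.finrank_lt
      intro htop
      have : x ∈ LinearMap.ker f := htop ▸ Submodule.mem_top
      rw [LinearMap.mem_ker] at this
      simp only [hf, LinearMap.coe_mk, AddHom.coe_mk] at this
      exact hxx.ne' this
    haveI : Nonempty { y // y ∈ t } := ⟨⟨htne.choose, htne.choose_spec⟩⟩
    have hvs : finrank ℝ (vectorSpan ℝ (t : Set E)) + 1 = t.card := by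
      have h := hai.finrank_vectorSpan_add_one
      have h2 : vectorSpan ℝ (Set.range (Subtype.val : {u // u ∈ t} → E))
          = vectorSpan ℝ (t : Set E) := by rw [Subtype.range_val]
      rw [h2, Fintype.card_coe] at h
      exact h
    have hle := Submodule.finrank_mono hker
    omega
  -- find a missing color
  set ch : E → Fin n := fun y => if h : ∃ j ∈ J, g j = y then h.choose else ⟨0, hn0⟩ with hch
  have hchspec : ∀ y, (∃ j ∈ J, g j = y) → ch y ∈ J ∧ g (ch y) = y := by
    intro y hy
    have : ch y = hy.choose := by simp [hch, dif_pos hy]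
    rw [this]
    exact hy.choose_spec
  obtain ⟨k, hk⟩ : ∃ k : Fin n, k ∉ t.image ch := by
    by_contra hco
    push_neg at hco
    have : (Finset.univ : Finset (Fin n)) ⊆ t.image ch := fun k _ => hco k
    have hc1 := Finset.card_le_card this
    have hc2 := Finset.card_image_le (f := ch) (s := t)
    simp only [Finset.card_univ, Fintype.card_fin] at hc1
    omega
  obtain ⟨y₀, hy₀mem, hy₀inner⟩ := exists_inner_nonpos (hb k) x
  obtain ⟨istar, rfl⟩ := hy₀mem
  set σ₁ : Fin n → ι := Function.update σ₀ k istar with hσ₁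
  set K' := convexHull ℝ (Set.range fun j => b j (σ₁ j)) with hK'
  have hxK1 : x ∈ K' := by
    have hsub : (t : Set E) ⊆ Set.range fun j => b j (σ₁ j) := by
      intro y hy
      obtain ⟨j, hjJ, hgj⟩ := hts hy
      have hex : ∃ j ∈ J, g j = y := ⟨j, hjJ, hgj⟩
      obtain ⟨hchJ, hchg⟩ := hchspec y hex
      have hne : ch y ≠ k := by
        intro h
        exact hk (h ▸ Finset.mem_image_of_mem ch hy)
      refine ⟨ch y, ?_⟩
      simp only [hσ₁, Function.update_of_ne hne]
      exact hchg
    exact convexHull_mono hsub hxt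
  have hyK1 : b k istar ∈ K' := subset_convexHull ℝ _ ⟨k, by simp [hσ₁]⟩
  -- strictly closer point
  set c : ℝ := ⟪x, x⟫ with hcdef
  set y := b k istar with hydef
  have hyx : y ≠ x := by
    intro h
    rw [h] at hy₀inner
    exact absurd hy₀inner (by push_neg; exact hxx)
  set D : ℝ := ‖y - x‖ ^ 2 with hDdef
  have hD : 0 < D := by
    have hne : y - x ≠ 0 := sub_ne_zero.mpr hyx
    rw [hDdef]
    exact pow_pos (norm_pos_iff.mpr hne) 2
  set s' : ℝ := min 1 (c / D) with hs'def
  have hs0 : 0 < s' := lt_min one_pos (div_pos hxx hD)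
  have hs1 : s' ≤ 1 := min_le_left _ _
  have hsD : s' * D ≤ c := by
    have h1 : s' ≤ c / D := min_le_right _ _
    calc s' * D ≤ (c / D) * D := mul_le_mul_of_nonneg_right h1 hD.le
      _ = c := div_mul_cancel₀ c hD.ne'
  set p : E := x + s' • (y - x) with hpdef
  have hpK' : p ∈ K' := by
    have hcomb : p = (1 - s') • x + s' • y := by
      simp only [hpdef, smul_sub, sub_smul, one_smul]
      abel
    rw [hcomb]
    exact (convex_convexHull ℝ _) hxK1 hyK1 (by linarith) hs0.le (by ring)
  have hDinner : D = (⟪y - x, y - x⟫) := (real_inner_self_eq_norm_sq _).symm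
  have hexp : (⟪p, p⟫) = c + 2 * s' * ((⟪x, y⟫) - c) + s' ^ 2 * D := by
    rw [hDinner]
    simp only [hpdef, hcdef, inner_add_left, inner_add_right, real_inner_smul_left,
      real_inner_smul_right, inner_sub_left, inner_sub_right]
    rw [real_inner_comm y x]
    ring
  have hpnorm : ‖p‖ ^ 2 < ‖x‖ ^ 2 := by
    rw [← real_inner_self_eq_norm_sq, ← real_inner_self_eq_norm_sq, hexp, ← hcdef]
    nlinarith
  have hplt : ‖p‖ < ‖x‖ := by
    nlinarith [norm_nonneg p, norm_nonneg x]
  have hinf : infDist 0 K' ≤ ‖p‖ := by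
    have h := infDist_le_dist_of_mem (x := (0:E)) hpK'
    rwa [dist_eq_norm, zero_sub, norm_neg] at h
  have hmin := hσ₀ σ₁
  rw [hxd, dist_eq_norm, zero_sub, norm_neg] at hmin
  have hmin' : ‖x‖ ≤ infDist 0 K' := hmin
  linarith

/-- **Tverberg's theorem.** Any `m ≥ (r-1)(d+1)+1` points of `ℝ^d` can be partitioned
into `r` nonempty pairwise disjoint parts whose convex hulls have a common point. -/
theorem tverberg
    (r d m : ℕ) (hr : 1 ≤ r) (hd : 1 ≤ d) (hm : m ≥ (r - 1) * (d + 1) + 1)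
    (S : Fin m → EuclideanSpace ℝ (Fin d)) :
    ∃ P : Fin r → Finset (Fin m),
      (∀ i, (P i).Nonempty) ∧
      (∀ i j, i ≠ j → Disjoint (P i) (P j)) ∧
      (∀ v : Fin m, ∃ i, v ∈ P i) ∧
      (⋂ i, convexHull ℝ (S '' ↑(P i))).Nonempty := by
  classical
  set n : ℕ := (r - 1) * (d + 1) + 1 with hn
  have hnm : n ≤ m := hm
  have hr0 : 0 < r := hr
  have hrlt : r - 1 < r := Nat.sub_lt hr0 one_pos
  set emb : Fin n → Fin m := Fin.castLE hnm with hemb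
  -- points with appended `1`
  set w : Fin n → Fin (d + 1) → ℝ :=
    fun j q => if h : (q : ℕ) < d then S (emb j) ⟨q, h⟩ else 1 with hw
  -- the vectors `v i`
  set v : Fin r → Fin (r - 1) → ℝ := fun i p =>
    if (i : ℕ) = (p : ℕ) then 1 else if (i : ℕ) = r - 1 then -1 else 0 with hv
  have hplt : ∀ p : Fin (r - 1), (p : ℕ) < r := fun p => lt_of_lt_of_le p.isLt (Nat.sub_le r 1)
  -- key summation identity for the `v i`
  have hkey : ∀ (c : Fin r → ℝ) (p : Fin (r - 1)),
      ∑ i : Fin r, c i * v i p = c ⟨p, hplt p⟩ - c ⟨r - 1, hrlt⟩ := by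
    intro c p
    have hpt : ∀ i : Fin r, c i * v i p =
        (if (⟨p, hplt p⟩ : Fin r) = i then c i else 0) +
        (if (⟨r - 1, hrlt⟩ : Fin r) = i then -c i else 0) := by
      intro i
      by_cases hA : (i : ℕ) = (p : ℕ)
      · have h1 : (⟨p, hplt p⟩ : Fin r) = i := by exact Fin.ext hA.symm
        have hB : ¬ (i : ℕ) = r - 1 := by
          have := p.isLt; omega
        have h2 : (⟨r - 1, hrlt⟩ : Fin r) ≠ i := by
          intro h
          exact hB (congrArg Fin.val h).symm
        simp [hv, hA, hB, h1, h2]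
      · by_cases hB : (i : ℕ) = r - 1
        · have h1 : (⟨p, hplt p⟩ : Fin r) ≠ i := fun h => hA (congrArg Fin.val h).symm
          have h2 : (⟨r - 1, hrlt⟩ : Fin r) = i := Fin.ext hB.symm
          have hne : ¬ (r - 1 = (p : ℕ)) := by have := p.isLt; omega
          simp [hv, hA, hB, h1, h2, hne]
        · have h1 : (⟨p, hplt p⟩ : Fin r) ≠ i := fun h => hA (congrArg Fin.val h).symm
          have h2 : (⟨r - 1, hrlt⟩ : Fin r) ≠ i := fun h => hB (congrArg Fin.val h).symm
          simp [hv, hA, hB, h1, h2]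
    rw [Finset.sum_congr rfl fun i _ => hpt i, Finset.sum_add_distrib,
      Finset.sum_ite_eq, Finset.sum_ite_eq]
    simp only [Finset.mem_univ, if_true]
    ring
  -- all-equal property
  have hvker : ∀ c : Fin r → ℝ, (∀ p, ∑ i : Fin r, c i * v i p = 0) →
      ∀ i : Fin r, c i = c ⟨r - 1, hrlt⟩ := by
    intro c hc i
    by_cases hB : (i : ℕ) = r - 1
    · have heq : i = (⟨r - 1, hrlt⟩ : Fin r) := Fin.ext hB
      rw [heq]
    · have hi : (i : ℕ) < r - 1 := by have := i.isLt; omega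
      have := hc ⟨i, hi⟩
      rw [hkey] at this
      have h1 : (⟨(⟨(i : ℕ), hi⟩ : Fin (r-1)), hplt _⟩ : Fin r) = i := Fin.ext rfl
      rw [h1] at this
      linarith
  -- the tensor points
  set b : Fin n → Fin r → EuclideanSpace ℝ (Fin (r - 1) × Fin (d + 1)) :=
    fun j i => WithLp.toLp 2 (fun pq : Fin (r - 1) × Fin (d + 1) => v i pq.1 * w j pq.2) with hb
  have hfr : finrank ℝ (EuclideanSpace ℝ (Fin (r - 1) × Fin (d + 1))) < n := by
    rw [finrank_euclideanSpace]
    simp [hn]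
  have hb0 : ∀ j, (0 : EuclideanSpace ℝ (Fin (r - 1) × Fin (d + 1))) ∈
      convexHull ℝ (Set.range (b j)) := by
    intro j
    have hsum0 : ∑ i : Fin r, b j i = 0 := by
      ext pq
      rw [WithLp.ofLp_sum, Finset.sum_apply]
      have : ∀ i : Fin r, b j i pq = (fun _ : Fin r => w j pq.2) i * v i pq.1 := by
        intro i; simp [hb]; ring
      rw [Finset.sum_congr rfl fun i _ => this i, hkey]
      simp
    have hws : (0:ℝ) < ∑ _i : Fin r, (1:ℝ) := by
      simp
      exact_mod_cast hr0
    have hmem := Finset.centerMass_mem_convexHull (Finset.univ : Finset (Fin r))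
      (fun i _ => zero_le_one) hws (fun i _ => Set.mem_range_self (f := b j) i)
    rwa [Finset.centerMass, show ∑ i : Fin r, (1:ℝ) • b j i = 0 by simp [hsum0], smul_zero]
      at hmem
  haveI : NeZero r := ⟨hr0.ne'⟩
  obtain ⟨σ, hσ⟩ := colorful_caratheodory hfr b hb0
  -- extract convex combination
  rw [convexHull_range_eq_exists_affineCombination] at hσ
  obtain ⟨s, lam0, hlam0, hlam1, hlamx⟩ := hσ
  rw [Finset.affineCombination_eq_linear_combination _ _ _ hlam1] at hlamx
  set lam : Fin n → ℝ := fun j => if j ∈ s then lam0 j else 0 with hlam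
  have hlam_nn : ∀ j, 0 ≤ lam j := by
    intro j
    by_cases h : j ∈ s <;> simp [hlam, h]
    exact hlam0 j h
  have hlam_sum : ∑ j : Fin n, lam j = 1 := by
    rw [← hlam1]
    simp [hlam, Finset.sum_ite_mem]
  have hlam_vec : ∑ j : Fin n, lam j • b j (σ j) = 0 := by
    rw [← hlamx]
    rw [show ∑ j : Fin n, lam j • b j (σ j)
        = ∑ j ∈ Finset.univ, (if j ∈ s then lam0 j • b j (σ j) else 0) from
      Finset.sum_congr rfl fun j _ => by by_cases h : j ∈ s <;> simp [hlam, h]]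
    rw [Finset.sum_ite_mem, Finset.univ_inter]
  -- fiber sums
  set z : Fin r → Fin (d + 1) → ℝ :=
    fun i q => ∑ j ∈ Finset.univ.filter (fun j => σ j = i), lam j * w j q with hz
  have hcoord : ∀ (p : Fin (r - 1)) (q : Fin (d + 1)),
      ∑ j : Fin n, lam j * (v (σ j) p * w j q) = 0 := by
    intro p q
    calc ∑ j : Fin n, lam j * (v (σ j) p * w j q)
        = (∑ j : Fin n, lam j • b j (σ j)) (p, q) := by
          rw [WithLp.ofLp_sum, Finset.sum_apply]
          exact Finset.sum_congr rfl fun j _ => rfl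
      _ = 0 := by rw [hlam_vec]; rfl
  set ilast : Fin r := ⟨r - 1, hrlt⟩ with hilast
  have hzeq : ∀ (q : Fin (d + 1)) (i : Fin r), z i q = z ilast q := by
    intro q
    apply hvker
    intro p
    have hterm : ∀ i : Fin r, z i q * v i p =
        ∑ j ∈ Finset.univ.filter (fun j => σ j = i), lam j * (v (σ j) p * w j q) := by
      intro i
      rw [hz]
      dsimp only
      rw [Finset.sum_mul]
      refine Finset.sum_congr rfl fun j hj => ?_
      have hji : σ j = i := (Finset.mem_filter.mp hj).2
      rw [hji]; ring
    rw [Finset.sum_congr rfl fun i _ => hterm i,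
      Finset.sum_fiberwise_of_maps_to (fun j _ => Finset.mem_univ (σ j))]
    exact hcoord p q
  set qlast : Fin (d + 1) := ⟨d, Nat.lt_succ_self d⟩ with hqlast
  have hwlast : ∀ j, w j qlast = 1 := by
    intro j
    simp [hw, hqlast]
  have hzlast : ∀ i : Fin r, z i qlast = ∑ j ∈ Finset.univ.filter (fun j => σ j = i), lam j := by
    intro i
    rw [hz]
    exact Finset.sum_congr rfl fun j _ => by rw [hwlast, mul_one]
  have hzsum : ∑ i : Fin r, z i qlast = 1 := by
    rw [Finset.sum_congr rfl fun i _ => hzlast i,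
      Finset.sum_fiberwise_of_maps_to (fun j _ => Finset.mem_univ (σ j))]
    exact hlam_sum
  set T : ℝ := z ilast qlast with hTdef
  have hTr : (r : ℝ) * T = 1 := by
    have h1 : ∑ _i : Fin r, T = (r : ℝ) * T := by
      rw [Finset.sum_const, Finset.card_univ, Fintype.card_fin, nsmul_eq_mul]
    rw [← h1, ← hzsum]
    exact (Finset.sum_congr rfl fun i _ => (hzeq qlast i)).symm
  have hrpos : (0:ℝ) < r := by exact_mod_cast hr0
  have hT : 0 < T := by nlinarith
  have hfib : ∀ i : Fin r, ∃ j : Fin n, σ j = i := by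
    intro i
    by_contra h
    push_neg at h
    have hempty : Finset.univ.filter (fun j => σ j = i) = ∅ :=
      Finset.filter_eq_empty_iff.mpr (fun {j} _ => h j)
    have h0 : z i qlast = 0 := by rw [hzlast, hempty, Finset.sum_empty]
    rw [hzeq qlast i] at h0
    exact hT.ne' h0
  set π : Fin m → Fin r := fun u => if h : (u : ℕ) < n then σ ⟨u, h⟩ else ilast with hπ
  set P : Fin r → Finset (Fin m) := fun i => Finset.univ.filter (fun u => π u = i) with hP
  have hπemb : ∀ j : Fin n, π (emb j) = σ j := by
    intro j
    have hlt : ((emb j) : ℕ) < n := j.isLt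
    show (if h : ((emb j) : ℕ) < n then σ ⟨(emb j), h⟩ else ilast) = σ j
    rw [dif_pos hlt]
    exact congrArg σ (Fin.ext rfl)
  -- the common point
  set y0 : EuclideanSpace ℝ (Fin d) := WithLp.toLp 2 (fun q' => z ilast (Fin.castSucc q')) with hy0
  set x : EuclideanSpace ℝ (Fin d) := T⁻¹ • y0 with hxdef
  have hx_mem : ∀ i : Fin r, x ∈ convexHull ℝ (S '' ↑(P i)) := by
    intro i
    set μ : Fin m → ℝ := fun u =>
      if h : (u : ℕ) < n then (if σ ⟨u, h⟩ = i then lam ⟨u, h⟩ else 0) else 0 with hμ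
    have hμ0 : ∀ u, 0 ≤ μ u := by
      intro u
      rw [hμ]
      dsimp only
      split
      · split
        · exact hlam_nn _
        · exact le_rfl
      · exact le_rfl
    have hμ_out : ∀ u : Fin m, u ∉ P i → μ u = 0 := by
      intro u hu
      rw [hμ]
      dsimp only
      split
      · rename_i h
        split
        · rename_i hσu
          exfalso
          apply hu
          rw [hP]
          refine Finset.mem_filter.mpr ⟨Finset.mem_univ _, ?_⟩
          show (if h' : (u : ℕ) < n then σ ⟨u, h'⟩ else ilast) = i
          rw [dif_pos h]
          exact hσu
        · rfl
      · rfl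
    have hμemb : ∀ j : Fin n, μ (emb j) = (if σ j = i then lam j else 0) := by
      intro j
      have hlt : ((emb j) : ℕ) < n := j.isLt
      rw [hμ]
      dsimp only
      rw [dif_pos hlt]
      have hjeq : (⟨((emb j) : ℕ), hlt⟩ : Fin n) = j := Fin.ext rfl
      rw [hjeq]
    have hembim : ∀ u : Fin m, u ∉ emb '' Set.univ → ¬ ((u : ℕ) < n) := by
      intro u hu h
      exact hu ⟨⟨(u : ℕ), h⟩, Set.mem_univ _, Fin.ext rfl⟩
    -- scalar sum
    have hμsum : ∑ u ∈ P i, μ u = T := by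
      have e1 : ∑ u ∈ P i, μ u = ∑ u : Fin m, μ u :=
        Finset.sum_subset (Finset.subset_univ _) (fun u _ hu => hμ_out u hu)
      have e2 : ∑ j : Fin n, (if σ j = i then lam j else 0) = ∑ u : Fin m, μ u := by
        refine Finset.sum_of_injOn emb ((Fin.castLE_injective hnm).injOn) ?_ ?_ ?_
        · intro j _; exact Finset.mem_univ _
        · intro u _ hu
          rw [hμ]
          dsimp only
          rw [dif_neg (hembim u (by simpa using hu))]
        · intro j _
          exact (hμemb j).symm
      rw [e1, ← e2, ← Finset.sum_filter]
      rw [← hzlast i, hzeq qlast i]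
    -- vector sum
    have hμvec : ∑ u ∈ P i, μ u • S u = y0 := by
      have e1 : ∑ u ∈ P i, μ u • S u = ∑ u : Fin m, μ u • S u := by
        refine Finset.sum_subset (Finset.subset_univ _) (fun u _ hu => ?_)
        rw [hμ_out u hu, zero_smul]
      have e2 : ∑ j : Fin n, (if σ j = i then lam j else 0) • S (emb j)
          = ∑ u : Fin m, μ u • S u := by
        refine Finset.sum_of_injOn emb ((Fin.castLE_injective hnm).injOn) ?_ ?_ ?_
        · intro j _; exact Finset.mem_univ _
        · intro u _ hu
          have h0 : μ u = 0 := by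
            rw [hμ]
            dsimp only
            rw [dif_neg (hembim u (by simpa using hu))]
          rw [h0, zero_smul]
        · intro j _
          rw [hμemb j]
      have e3 : ∀ q' : Fin d, ∑ j : Fin n, ((if σ j = i then lam j else 0) • S (emb j)) q'
          = z i (Fin.castSucc q') := by
        intro q'
        have hwq : ∀ j, w j (Fin.castSucc q') = S (emb j) q' := by
          intro j
          rw [hw]
          dsimp only
          rw [dif_pos (show ((Fin.castSucc q') : ℕ) < d from q'.isLt)]
          exact congrArg (S (emb j)) (Fin.ext rfl)
        calc ∑ j : Fin n, ((if σ j = i then lam j else 0) • S (emb j)) q'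
            = ∑ j : Fin n, (if σ j = i then lam j * w j (Fin.castSucc q') else 0) := by
              refine Finset.sum_congr rfl fun j _ => ?_
              by_cases hσ : σ j = i
              · rw [if_pos hσ, if_pos hσ, hwq]; rfl
              · rw [if_neg hσ, if_neg hσ]
                simp
          _ = z i (Fin.castSucc q') := by
              rw [hz]
              dsimp only
              rw [Finset.sum_filter]
      rw [e1, ← e2]
      ext q'
      calc (∑ j : Fin n, (if σ j = i then lam j else 0) • S (emb j)) q'
          = ∑ j : Fin n, ((if σ j = i then lam j else 0) • S (emb j)) q' :=
            by rw [WithLp.ofLp_sum, Finset.sum_apply]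
        _ = z i (Fin.castSucc q') := e3 q'
        _ = z ilast (Fin.castSucc q') := by rw [hzeq]
        _ = y0 q' := rfl
    have hcm := (P i).centerMass_mem_convexHull (w := μ) (fun u _ => hμ0 u)
      (by rw [hμsum]; exact hT)
      (fun u hu => Set.mem_image_of_mem S (Finset.mem_coe.mpr hu))
    rw [Finset.centerMass, hμsum, hμvec] at hcm
    exact hcm
  exact ⟨P, fun i => by
      obtain ⟨j, hj⟩ := hfib i
      exact ⟨emb j, Finset.mem_filter.mpr ⟨Finset.mem_univ _, by rw [hπemb j, hj]⟩⟩,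
    fun i j hij => Finset.disjoint_left.mpr (fun u hu1 hu2 => by
      have h1 : π u = i := (Finset.mem_filter.mp hu1).2
      have h2 : π u = j := (Finset.mem_filter.mp hu2).2
      exact hij (h1 ▸ h2 ▸ rfl)),
    fun u => ⟨π u, Finset.mem_filter.mpr ⟨Finset.mem_univ _, rfl⟩⟩,
    ⟨x, Set.mem_iInter.mpr hx_mem⟩⟩
end

section
/- Let 0 ≤ d < n and let V be a d-dimensional linear subspace of ℝ^n. Then the complement ℝ^n \ V is homotopy equivalent to the sphere S^{n−d−1} (the unit sphere in an (n−d)-dimensional Euclidean space). -/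
open Set Metric ContinuousMap

/-- A product with a contractible space is homotopy equivalent to the first factor. -/
lemma prod_contractible_homotopyEquiv (X C : Type*) [TopologicalSpace X] [TopologicalSpace C]
    [ContractibleSpace C] : Nonempty (ContinuousMap.HomotopyEquiv (X × C) X) := by
  obtain ⟨c0, H⟩ := id_nullhomotopic C
  refine ⟨⟨⟨Prod.fst, continuous_fst⟩, ⟨fun x => (x, c0), by fun_prop⟩, ?_, ?_⟩⟩
  · have h1 : ContinuousMap.Homotopic (ContinuousMap.snd : C(X × C, C))
        (ContinuousMap.const _ c0) := by
      have := H.comp (ContinuousMap.Homotopic.refl (ContinuousMap.snd : C(X × C, C)))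
      simpa using this
    have h2 := (ContinuousMap.Homotopic.refl (ContinuousMap.fst : C(X × C, X))).prodMk h1
    have e1 : ((⟨fun x => (x, c0), by fun_prop⟩ : C(X, X × C)).comp
        (⟨Prod.fst, continuous_fst⟩ : C(X × C, X)))
        = (ContinuousMap.fst.prodMk (ContinuousMap.const _ c0)) := by ext p <;> rfl
    have e2 : (ContinuousMap.id (X × C)) = (ContinuousMap.fst.prodMk ContinuousMap.snd) := by
      ext p <;> rfl
    rw [e1, e2]
    exact h2.symm
  · exact ContinuousMap.Homotopic.refl _

/-- Pulling a predicate on the second factor out of a product. -/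
def prodSubtypeSndHomeomorph (X Y : Type*) [TopologicalSpace X] [TopologicalSpace Y]
    (Q : Y → Prop) : {p : X × Y // Q p.2} ≃ₜ X × {y : Y // Q y} where
  toFun p := (p.1.1, ⟨p.1.2, p.2⟩)
  invFun q := ⟨(q.1, q.2.1), q.2.2⟩
  left_inv _ := rfl
  right_inv _ := rfl
  continuous_toFun := by
    apply Continuous.prodMk
    · exact continuous_fst.comp continuous_subtype_val
    · exact Continuous.subtype_mk (continuous_snd.comp continuous_subtype_val) _
  continuous_invFun := by
    apply Continuous.subtype_mk
    exact Continuous.prodMk continuous_fst (continuous_subtype_val.comp continuous_snd)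

/-- **The complement of a `d`-dimensional linear subspace of `ℝ^n` is homotopy
equivalent to the sphere `S^{n-d-1}`.** -/
theorem complement_subspace_homotopyEquiv_sphere
    (n d : ℕ) (hdn : d < n)
    (V : Submodule ℝ (EuclideanSpace ℝ (Fin n)))
    (hV : Module.finrank ℝ V = d) :
    Nonempty
      (ContinuousMap.HomotopyEquiv
        {x : EuclideanSpace ℝ (Fin n) // x ∉ V}
        (Metric.sphere (0 : EuclideanSpace ℝ (Fin (n - d))) 1)) := by
  classical
  let E := EuclideanSpace ℝ (Fin n)
  let E' := EuclideanSpace ℝ (Fin (n - d))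
  have hW : Module.finrank ℝ Vᗮ = n - d := by
    have h := V.finrank_add_finrank_orthogonal
    rw [hV] at h
    rw [finrank_euclideanSpace_fin] at h
    omega
  set W := Vᗮ with hWdef
  have hcompl : IsCompl V W := V.isCompl_orthogonal
  let eL : (V × W) ≃ₗ[ℝ] E := Submodule.prodEquivOfIsCompl V W hcompl
  let eT : (V × W) ≃ₜ E := eL.toContinuousLinearEquiv.toHomeomorph
  have hmem : ∀ p : V × W, ((eT p : E) ∈ V ↔ p.2 = 0) := by
    rintro ⟨v, w⟩
    have hval : (eT (v, w) : E) = (v : E) + (w : E) := by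
      rfl
    constructor
    · intro hin
      rw [hval] at hin
      have hwv : (w : E) ∈ V := by
        have : (v : E) + (w : E) - (v : E) ∈ V := V.sub_mem hin v.2
        simpa using this
      have : (w : E) ∈ V ⊓ W := ⟨hwv, w.2⟩
      rw [hcompl.inf_eq_bot] at this
      exact Subtype.ext (by simpa using this)
    · intro hw
      have hw' : w = 0 := hw
      rw [hval, hw']
      simp [v.2]
  let e1 : {p : V × W // p.2 ≠ 0} ≃ₜ {x : E // x ∉ V} :=
    eT.subtype (fun p => by simpa using (hmem p).not.symm)
  let e2 : {p : V × W // p.2 ≠ 0} ≃ₜ V × {w : W // w ≠ 0} :=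
    prodSubtypeSndHomeomorph V W (fun w => w ≠ 0)
  -- identify W with E'
  let φ : W ≃ₗᵢ[ℝ] E' := ((stdOrthonormalBasis ℝ W).reindex (finCongr hW)).repr
  let e3 : {w : W // w ≠ 0} ≃ₜ ({0}ᶜ : Set E') :=
    φ.toHomeomorph.subtype (fun w => by
      simp [Set.mem_compl_iff, Set.mem_singleton_iff, φ.map_eq_zero_iff])
  let e4 : ({0}ᶜ : Set E') ≃ₜ (sphere (0 : E') 1 × Ioi (0 : ℝ)) :=
    homeomorphUnitSphereProd E'
  let htot : {x : E // x ∉ V} ≃ₜ (sphere (0 : E') 1 × Ioi (0 : ℝ)) × V :=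
    (e1.symm.trans e2).trans (((Homeomorph.refl V).prodCongr (e3.trans e4)).trans
      (Homeomorph.prodComm _ _))
  haveI : ContractibleSpace (Ioi (0 : ℝ)) :=
    (convex_Ioi (0 : ℝ)).contractibleSpace ⟨1, by norm_num⟩
  haveI : ContractibleSpace V := inferInstance
  obtain ⟨h1⟩ := prod_contractible_homotopyEquiv (sphere (0 : E') 1 × Ioi (0 : ℝ)) V
  obtain ⟨h2⟩ := prod_contractible_homotopyEquiv (sphere (0 : E') 1) (Ioi (0 : ℝ))
  exact ⟨(htot.toHomotopyEquiv.trans h1).trans h2⟩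
end

section
/- Affine Tverberg theorem (reformulation): Let r ≥ 1, d ≥ 1, N = (r−1)(d+1), and m = N + 1. Then for every affine map f : stdSimplex ℝ (Fin m) → ℝ^d (i.e., the restriction to the standard simplex of an affine map from ℝ^m to ℝ^d) there exist r nonempty pairwise disjoint finsets Δ_1, …, Δ_r of Fin m such that ⋂_{i=1}^r f(Face(Δ_i)) ≠ ∅. -/
open Metric Set Finset Module

variable {E : Type*} [NormedAddCommGroup E] [InnerProductSpace ℝ E] [FiniteDimensional ℝ E]

local notation "⟪" x ", " y "⟫" => @inner ℝ _ _ x y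

omit [FiniteDimensional ℝ E] in
theorem hull_aux {ι : Type*} [Fintype ι] [Nonempty ι] (g : ι → E) (u : E) :
    ∃ q ∈ convexHull ℝ (Set.range g), dist u q = infDist u (convexHull ℝ (Set.range g)) ∧
      ∀ w ∈ convexHull ℝ (Set.range g), ⟪u - q, w - q⟫ ≤ 0 := by
  have hK : IsCompact (convexHull ℝ (Set.range g)) := (Set.finite_range g).isCompact_convexHull ℝ
  have hKne : (convexHull ℝ (Set.range g)).Nonempty :=
    ⟨g (Classical.arbitrary ι), subset_convexHull ℝ _ (Set.mem_range_self _)⟩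
  obtain ⟨q, hqK, hq⟩ := hK.exists_infDist_eq_dist hKne u
  refine ⟨q, hqK, hq.symm, ?_⟩
  rw [← norm_eq_iInf_iff_real_inner_le_zero (convex_convexHull ℝ _) hqK]
  rw [infDist_eq_iInf, dist_eq_norm] at hq
  rw [← hq]
  congr 1
  ext w
  exact (dist_eq_norm u (w : E))

set_option maxHeartbeats 1000000 in
/-- Bárány's colorful Carathéodory theorem (for the point `0`). -/
theorem colorful_caratheodory_s13 {n : ℕ} (hn : finrank ℝ E ≤ n)
    (C : Fin (n + 1) → Finset E) (hC : ∀ j, (0 : E) ∈ convexHull ℝ (C j : Set E)) :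
    ∃ g : Fin (n + 1) → E, (∀ j, g j ∈ C j) ∧ (0 : E) ∈ convexHull ℝ (Set.range g) := by
  classical
  set T : Finset (Fin (n + 1) → E) := Fintype.piFinset C with hT
  have hTmem : ∀ g : Fin (n + 1) → E, g ∈ T ↔ ∀ j, g j ∈ C j := by
    intro g; simp [hT, Fintype.mem_piFinset]
  have hTne : T.Nonempty := by
    have : ∀ j, ∃ x, x ∈ C j := by
      intro j
      obtain ⟨x, hx⟩ : (C j : Set E).Nonempty := by
        rw [← convexHull_nonempty_iff (𝕜 := ℝ)]; exact ⟨0, hC j⟩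
      exact ⟨x, hx⟩
    choose g0 hg0 using this
    exact ⟨g0, (hTmem g0).mpr hg0⟩
  obtain ⟨g, hgT, hgmin⟩ := T.exists_min_image
    (fun g => infDist 0 (convexHull ℝ (Set.range g))) hTne
  have hgC : ∀ j, g j ∈ C j := (hTmem g).mp hgT
  refine ⟨g, hgC, ?_⟩
  by_contra h0
  set K : Set E := convexHull ℝ (Set.range g) with hK
  set δ : ℝ := infDist 0 K with hδ
  have hKcl : IsClosed K := ((Set.finite_range g).isCompact_convexHull ℝ).isClosed
  have hKne : K.Nonempty := ⟨g 0, subset_convexHull ℝ _ (Set.mem_range_self _)⟩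
  have hδpos : 0 < δ := by
    rcases lt_or_eq_of_le (infDist_nonneg (x := (0:E)) (s := K)) with h | h
    · exact h
    · exact absurd ((hKcl.mem_iff_infDist_zero hKne).mpr h.symm) h0
  obtain ⟨q, hqK, hqd, hqnear⟩ := hull_aux g 0
  have hqnorm : ‖q‖ = δ := by rw [← dist_zero_left]; exact hqd
  have hqn : ⟪q, q⟫ = δ ^ 2 := by rw [real_inner_self_eq_norm_sq, hqnorm]
  have hq0 : q ≠ 0 := by
    intro h; rw [h, norm_zero] at hqnorm; exact absurd hqnorm.symm (ne_of_gt hδpos)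
  have hge : ∀ w ∈ K, δ ^ 2 ≤ ⟪q, w⟫ := by
    intro w hw
    have h1 := hqnear w hw
    rw [zero_sub, inner_neg_left, inner_sub_right, neg_nonpos] at h1
    · rw [hqn] at h1; linarith [h1]
  -- weights for q
  set s : Finset E := Finset.image g Finset.univ with hs
  have hrange : Set.range g = ↑s := by rw [hs]; simp
  have hqmem : q ∈ convexHull ℝ (s : Set E) := by rwa [← hrange]
  obtain ⟨w, hw0, hw1, hwq⟩ := Finset.mem_convexHull.mp hqmem
  -- contact set
  set s' : Finset E := s.filter (fun y => w y ≠ 0) with hs'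
  have hcontact : ∀ y ∈ s', ⟪q, y⟫ = δ ^ 2 := by
    have hsumq : ∑ y ∈ s, w y • y = q := by
      have h := Finset.centerMass_eq_of_sum_1 s id hw1
      rw [hwq] at h
      simpa [id_eq] using h.symm
    have hsum0 : ∑ y ∈ s, w y * (⟪q, y⟫ - δ ^ 2) = 0 := by
      have h1 : ∑ y ∈ s, w y * ⟪q, y⟫ = δ ^ 2 := by
        have := congrArg (fun x => ⟪q, x⟫) hsumq
        simpa [inner_sum, real_inner_smul_right, hqn, hqnorm] using this
      have h2 : ∑ y ∈ s, w y * δ ^ 2 = δ ^ 2 := by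
        rw [← Finset.sum_mul, hw1, one_mul]
      simp [mul_sub, Finset.sum_sub_distrib, h1, h2]
    have hnn : ∀ y ∈ s, 0 ≤ w y * (⟪q, y⟫ - δ ^ 2) := by
      intro y hy
      have hyK : y ∈ K := subset_convexHull ℝ _ (by rwa [hrange])
      exact mul_nonneg (hw0 y hy) (by linarith [hge y hyK])
    intro y hy
    rw [hs', Finset.mem_filter] at hy
    have := (Finset.sum_eq_zero_iff_of_nonneg hnn).mp hsum0 y hy.1
    rcases mul_eq_zero.mp this with h | h
    · exact absurd h hy.2
    · linarith [h]
  have hq's' : q ∈ convexHull ℝ (s' : Set E) := by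
    rw [← hwq, ← Finset.centerMass_filter_ne_zero (w := w) id]
    refine Finset.centerMass_id_mem_convexHull _ (fun y hy => hw0 y (Finset.mem_filter.mp hy).1) ?_
    rw [Finset.sum_filter_ne_zero, hw1]; exact one_pos
  -- Caratheodory
  rw [convexHull_eq_union] at hq's'
  simp only [Set.mem_iUnion] at hq's'
  obtain ⟨t, hts, hai, hqt⟩ := hq's'
  -- card bound
  have hcard : t.card ≤ n := by
    have hsub : vectorSpan ℝ (Set.range (Subtype.val : {x : E // x ∈ t} → E)) ≤ (ℝ ∙ q)ᗮ := by
      rw [vectorSpan_def, Submodule.span_le]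
      rintro v ⟨y, ⟨⟨y, hy⟩, rfl⟩, y', ⟨⟨y', hy'⟩, rfl⟩, rfl⟩
      rw [SetLike.mem_coe, Submodule.mem_orthogonal_singleton_iff_inner_right]
      show ⟪q, y - y'⟫ = 0
      have h1 := hcontact y (Finset.mem_coe.mp (hts (Finset.mem_coe.mpr hy)))
      have h2 := hcontact y' (Finset.mem_coe.mp (hts (Finset.mem_coe.mpr hy')))
      rw [inner_sub_right, h1, h2, sub_self]
    have h1 := hai.card_le_finrank_succ
    rw [Fintype.card_coe] at h1
    have h2 : finrank ℝ (vectorSpan ℝ (Set.range (Subtype.val : {x : E // x ∈ t} → E))) ≤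
        finrank ℝ (ℝ ∙ q)ᗮ := Submodule.finrank_mono hsub
    have h3 : finrank ℝ (ℝ ∙ q) + finrank ℝ (ℝ ∙ q)ᗮ = finrank ℝ E :=
      Submodule.finrank_add_finrank_orthogonal _
    rw [finrank_span_singleton hq0] at h3
    omega
  -- pick an unused index
  have hpre : ∀ y ∈ t, ∃ j, g j = y := by
    intro y hy
    have : y ∈ s := (Finset.mem_filter.mp (hts hy)).1
    rw [hs, Finset.mem_image] at this
    obtain ⟨j, _, hj⟩ := this
    exact ⟨j, hj⟩
  choose pre hpre' using hpre
  set J : Finset (Fin (n + 1)) := t.attach.image (fun y => pre y.1 y.2) with hJ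
  have hJcard : J.card ≤ n := le_trans (Finset.card_image_le.trans (by simp)) hcard
  obtain ⟨j0, hj0⟩ : ∃ j0, j0 ∉ J := by
    by_contra h
    push_neg at h
    have : (Finset.univ : Finset (Fin (n + 1))).card ≤ J.card :=
      Finset.card_le_card (fun j _ => h j)
    simp at this
    omega
  -- find improving point z
  obtain ⟨z, hzC, hzlt⟩ : ∃ z ∈ C j0, ⟪q, z⟫ < δ ^ 2 := by
    by_contra h
    push_neg at h
    have hlin : IsLinearMap ℝ (fun y : E => ⟪q, y⟫) :=
      ⟨fun x y => inner_add_right q x y, fun c x => real_inner_smul_right q x c⟩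
    have hsubset : convexHull ℝ (C j0 : Set E) ⊆ {y | δ ^ 2 ≤ ⟪q, y⟫} :=
      convexHull_min (fun y hy => h y hy) (convex_halfSpace_ge hlin _)
    have := hsubset (hC j0)
    simp only [Set.mem_setOf_eq, inner_zero_right] at this
    nlinarith [hδpos]
  -- the new transversal
  set g' : Fin (n + 1) → E := Function.update g j0 z with hg'
  have hg'T : g' ∈ T := by
    rw [hTmem]
    intro j
    rcases eq_or_ne j j0 with rfl | hj
    · simp [hg', hzC]
    · simp [hg', Function.update_of_ne hj, hgC j]
  have htg' : (t : Set E) ⊆ Set.range g' := by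
    intro y hy
    have hyt : y ∈ t := hy
    have hne : pre y hyt ≠ j0 := by
      intro h
      apply hj0
      rw [← h, hJ]
      exact Finset.mem_image.mpr ⟨⟨y, hyt⟩, Finset.mem_attach _ _, rfl⟩
    exact ⟨pre y hyt, by rw [hg', Function.update_of_ne hne]; exact hpre' y hyt⟩
  have hqK' : q ∈ convexHull ℝ (Set.range g') := convexHull_mono htg' hqt
  have hzK' : z ∈ convexHull ℝ (Set.range g') :=
    subset_convexHull ℝ _ ⟨j0, by rw [hg', Function.update_self]⟩
  -- the improvement
  set c : ℝ := ⟪q, z⟫ - δ ^ 2 with hc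
  have hcneg : c < 0 := by rw [hc]; linarith
  have hzq : z ≠ q := by
    intro h; rw [h, hqn] at hzlt; exact lt_irrefl _ hzlt
  set B : ℝ := ‖z - q‖ ^ 2 with hB
  have hBpos : 0 < B := by
    rw [hB]
    have h' : z - q ≠ 0 := sub_ne_zero.mpr hzq
    exact pow_pos (norm_pos_iff.mpr h') 2
  set s0 : ℝ := min 1 (-c / B) with hs0
  have hs0pos : 0 < s0 := lt_min one_pos (div_pos (neg_pos.mpr hcneg) hBpos)
  have hs0le1 : s0 ≤ 1 := min_le_left _ _
  have hs0leB : s0 * B ≤ -c := by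
    rw [← le_div_iff₀ hBpos]; exact min_le_right _ _
  set w0 : E := q + s0 • (z - q) with hw0
  have hw0K' : w0 ∈ convexHull ℝ (Set.range g') := by
    have h1 : w0 = (1 - s0) • q + s0 • z := by
      rw [hw0]; module
    rw [h1]
    exact (convex_convexHull ℝ _) hqK' hzK' (by linarith) hs0pos.le (by ring)
  have hnormsq : ‖w0‖ ^ 2 = δ ^ 2 + 2 * s0 * c + s0 ^ 2 * B := by
    rw [hw0, norm_add_sq_real, hqnorm]
    congr 1
    · congr 1
      rw [real_inner_smul_right, inner_sub_right, hqn]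
      ring
    · rw [norm_smul, mul_pow, hB]
      simp [abs_of_pos hs0pos]
  have hlt : ‖w0‖ ^ 2 < δ ^ 2 := by
    have h1 : s0 ^ 2 * B ≤ s0 * (-c) := by
      have := mul_le_mul_of_nonneg_left hs0leB hs0pos.le
      calc s0 ^ 2 * B = s0 * (s0 * B) := by ring
        _ ≤ s0 * (-c) := this
    have h2 : 2 * s0 * c + s0 ^ 2 * B ≤ s0 * c := by nlinarith
    have h3 : s0 * c < 0 := mul_neg_of_pos_of_neg hs0pos hcneg
    linarith
  have hwlt : ‖w0‖ < δ := lt_of_pow_lt_pow_left₀ 2 hδpos.le hlt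
  have hfinal : infDist 0 (convexHull ℝ (Set.range g')) < δ := by
    calc infDist 0 (convexHull ℝ (Set.range g')) ≤ dist 0 w0 := infDist_le_dist_of_mem hw0K'
      _ = ‖w0‖ := by rw [dist_zero_left]
      _ < δ := hwlt
  have := hgmin g' hg'T
  linarith

lemma sum_ite_val {r : ℕ} (c : ℕ) (hc : c < r) (f : Fin r → ℝ) :
    ∑ i : Fin r, (if (i : ℕ) = c then 1 else 0) * f i = f ⟨c, hc⟩ := by
  rw [Finset.sum_eq_single ⟨c, hc⟩]
  · simp
  · intro b _ hb
    have : (b : ℕ) ≠ c := by simpa [Fin.ext_iff] using hb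
    simp [this]
  · simp

/-- An affine map on the simplex is determined by its vertex values. -/
lemma affine_eq_comb {m d : ℕ} (F : (Fin m → ℝ) →ᵃ[ℝ] EuclideanSpace ℝ (Fin d))
    (x : Fin m → ℝ) (hx : ∑ j, x j = 1) :
    F x = ∑ j, x j • F (Pi.single j 1) := by
  classical
  have he : ∀ j : Fin m, (Pi.single j 1 : Fin m → ℝ) = fun j' => if j = j' then 1 else 0 := by
    intro j; funext j'; rw [Pi.single_apply]; simp [eq_comm]
  have h1 : x = Finset.univ.affineCombination ℝ (fun j => (Pi.single j 1 : Fin m → ℝ)) x := by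
    rw [Finset.affineCombination_eq_linear_combination _ _ _ hx]
    simp_rw [he]
    exact pi_eq_sum_univ x
  calc F x = F (Finset.univ.affineCombination ℝ (fun j => (Pi.single j 1 : Fin m → ℝ)) x) := by
        rw [← h1]
    _ = Finset.univ.affineCombination ℝ (fun j => F (Pi.single j 1)) x :=
        Finset.map_affineCombination _ _ _ hx F
    _ = ∑ j, x j • F (Pi.single j 1) :=
        Finset.affineCombination_eq_linear_combination _ _ _ hx

set_option maxHeartbeats 2000000 in
/-- **Affine Tverberg theorem (reformulation).** -/
theorem affine_tverberg
    (r d N m : ℕ) (hr : 1 ≤ r) (hd : 1 ≤ d)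
    (hN : N = (r - 1) * (d + 1)) (hm : m = N + 1)
    (F : (Fin m → ℝ) →ᵃ[ℝ] EuclideanSpace ℝ (Fin d)) :
    ∃ Δ : Fin r → Finset (Fin m),
      (∀ i, (Δ i).Nonempty) ∧
      (∀ i j, i ≠ j → Disjoint (Δ i) (Δ j)) ∧
      (⋂ i, (fun x : stdSimplex ℝ (Fin m) => F ↑x) '' simplexFace (Δ i)).Nonempty := by
  classical
  subst hm
  -- the ambient Euclidean space for Sarkaria's trick
  have hfr : Module.finrank ℝ (EuclideanSpace ℝ (Fin (r - 1) × Fin (d + 1))) ≤ N := by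
    rw [finrank_euclideanSpace, Fintype.card_prod, Fintype.card_fin, Fintype.card_fin, hN]
  -- vertex images and lifted points
  set a : Fin (N + 1) → EuclideanSpace ℝ (Fin d) := fun j => F (Pi.single j 1) with ha
  set ab : Fin (N + 1) → Fin (d + 1) → ℝ :=
    fun j k => if h : (k : ℕ) < d then a j ⟨k, h⟩ else 1 with hab
  set v : Fin r → Fin (r - 1) → ℝ :=
    fun i i' => (if (i : ℕ) = (i' : ℕ) then 1 else 0) -
      (if (i : ℕ) = r - 1 then 1 else 0) with hv
  set bb : Fin (N + 1) → Fin r → EuclideanSpace ℝ (Fin (r - 1) × Fin (d + 1)) :=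
    fun j i => WithLp.toLp 2 (fun p => v i p.1 * ab j p.2 : Fin (r - 1) × Fin (d + 1) → ℝ) with hbb
  set C : Fin (N + 1) → Finset (EuclideanSpace ℝ (Fin (r - 1) × Fin (d + 1))) :=
    fun j => Finset.image (bb j) Finset.univ with hC
  -- the columns sum to zero
  have hvsum : ∀ i' : Fin (r - 1), ∑ i : Fin r, v i i' = 0 := by
    intro i'
    have h1 : ∑ i : Fin r, (if (i : ℕ) = (i' : ℕ) then (1 : ℝ) else 0) = 1 := by
      have := sum_ite_val (i' : ℕ) (lt_of_lt_of_le i'.isLt (Nat.sub_le r 1)) (fun _ => (1 : ℝ))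
      simpa using this
    have h2 : ∑ i : Fin r, (if (i : ℕ) = r - 1 then (1 : ℝ) else 0) = 1 := by
      have := sum_ite_val (r := r) (r - 1) (Nat.sub_lt hr Nat.one_pos) (fun _ => (1 : ℝ))
      simpa using this
    rw [hv]
    simp only [Finset.sum_sub_distrib, h1, h2, sub_self]
  have hbsum : ∀ j, ∑ i : Fin r, bb j i = 0 := by
    intro j
    refine PiLp.ext fun p => ?_
    have h1 : (∑ i : Fin r, bb j i) p = ∑ i : Fin r, bb j i p :=
      by rw [WithLp.ofLp_sum, Finset.sum_apply p Finset.univ _]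
    rw [h1]
    show ∑ i : Fin r, v i p.1 * ab j p.2 = (0 : ℝ)
    rw [← Finset.sum_mul, hvsum p.1, zero_mul]
  have hCmem : ∀ j, (0 : EuclideanSpace ℝ (Fin (r - 1) × Fin (d + 1))) ∈
      convexHull ℝ (C j : Set (EuclideanSpace ℝ (Fin (r - 1) × Fin (d + 1)))) := by
    intro j
    have hz : Finset.univ.centerMass (fun _ : Fin r => (1 : ℝ)) (bb j) = 0 := by
      rw [Finset.centerMass]
      simp only [one_smul, hbsum j, smul_zero]
    rw [← hz]
    refine Finset.centerMass_mem_convexHull _ (fun i _ => zero_le_one) ?_ (fun i _ => ?_)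
    · simp only [Finset.sum_const, Finset.card_univ, Fintype.card_fin, nsmul_eq_mul, mul_one]
      exact_mod_cast hr
    · exact Finset.mem_coe.mpr (Finset.mem_image_of_mem _ (Finset.mem_univ i))
  -- colorful Caratheodory
  obtain ⟨g, hgC, hg0⟩ := colorful_caratheodory_s13 hfr C hCmem
  -- extract weights
  rw [convexHull_range_eq_exists_affineCombination] at hg0
  obtain ⟨sF, w, hw0, hw1, hwaff⟩ := hg0
  rw [Finset.affineCombination_eq_linear_combination _ _ _ hw1] at hwaff
  set lam : Fin (N + 1) → ℝ := fun j => if j ∈ sF then w j else 0 with hlam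
  have hlam0 : ∀ j, 0 ≤ lam j := by
    intro j; rw [hlam]
    by_cases h : j ∈ sF <;> simp [h, hw0 j]
  have hlamsub : ∀ f : Fin (N + 1) → EuclideanSpace ℝ (Fin (r - 1) × Fin (d + 1)),
      ∑ j, lam j • f j = ∑ j ∈ sF, w j • f j := by
    intro f
    rw [← Finset.sum_subset (Finset.subset_univ sF)
      (f := fun j => lam j • f j) (by intro j _ hj; simp [hlam, hj])]
    refine Finset.sum_congr rfl fun j hj => ?_
    simp [hlam, hj]
  have hlam1 : ∑ j, lam j = 1 := by
    rw [← Finset.sum_subset (Finset.subset_univ sF)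
      (f := lam) (by intro j _ hj; simp [hlam, hj]), ← hw1]
    exact Finset.sum_congr rfl fun j hj => by simp [hlam, hj]
  have hlamg : ∑ j, lam j • g j = 0 := by rw [hlamsub g, hwaff]
  -- choose colors
  have hex : ∀ j, ∃ i, bb j i = g j := by
    intro j
    have h := hgC j
    rw [hC] at h
    obtain ⟨i, _, hi⟩ := Finset.mem_image.mp h
    exact ⟨i, hi⟩
  choose σ hσ using hex
  -- coordinatewise equation
  have hcoordeq : ∀ p : Fin (r - 1) × Fin (d + 1),
      ∑ j, lam j * (v (σ j) p.1 * ab j p.2) = 0 := by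
    intro p
    have h := congrArg (fun x => x p) hlamg
    have h1 : (∑ j, lam j • g j) p = ∑ j, lam j * g j p := by
      rw [WithLp.ofLp_sum, Finset.sum_apply p Finset.univ _]
      exact Finset.sum_congr rfl fun j _ => rfl
    rw [h1] at h
    have h2 : ∀ j, lam j * g j p = lam j * (v (σ j) p.1 * ab j p.2) := by
      intro j; rw [← hσ j]
    rw [← Finset.sum_congr rfl (fun j _ => h2 j)]
    exact h
  -- group the sum by color
  set W : Fin r → Fin (d + 1) → ℝ :=
    fun i k => ∑ j ∈ Finset.univ.filter (fun j => σ j = i), lam j * ab j k with hW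
  set lastr : Fin r := ⟨r - 1, Nat.sub_lt hr Nat.one_pos⟩ with hlastr
  have hgrouped : ∀ (i' : Fin (r - 1)) (k : Fin (d + 1)),
      ∑ i : Fin r, v i i' * W i k = 0 := by
    intro i' k
    have h1 : ∀ i : Fin r, v i i' * W i k =
        ∑ j ∈ Finset.univ.filter (fun j => σ j = i), lam j * (v (σ j) i' * ab j k) := by
      intro i
      rw [hW, Finset.mul_sum]
      refine Finset.sum_congr rfl fun j hj => ?_
      have hji : σ j = i := (Finset.mem_filter.mp hj).2
      rw [hji]; ring
    rw [Finset.sum_congr rfl (fun i _ => h1 i), Finset.sum_fiberwise]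
    exact hcoordeq (i', k)
  -- all the W's are equal
  have hWeq : ∀ (i : Fin r) (k : Fin (d + 1)), W i k = W lastr k := by
    intro i k
    rcases eq_or_ne i lastr with rfl | hne
    · rfl
    · have hine : (i : ℕ) ≠ r - 1 := by
        intro h; exact hne (Fin.ext h)
      have hilt : (i : ℕ) < r - 1 := by
        have := i.isLt; omega
      have h := hgrouped ⟨(i : ℕ), hilt⟩ k
      have hexp : ∑ i'' : Fin r, v i'' (⟨(i : ℕ), hilt⟩ : Fin (r - 1)) * W i'' k
          = W ⟨(i : ℕ), i.isLt⟩ k - W ⟨r - 1, Nat.sub_lt hr Nat.one_pos⟩ k := by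
        rw [hv]
        simp only [sub_mul]
        rw [Finset.sum_sub_distrib,
          sum_ite_val (c := ((⟨(i : ℕ), hilt⟩ : Fin (r - 1)) : ℕ)) i.isLt (fun i'' => W i'' k),
          sum_ite_val (r - 1) (Nat.sub_lt hr Nat.one_pos) (fun i'' => W i'' k)]
      rw [hexp] at h
      have hieq : (⟨(i : ℕ), i.isLt⟩ : Fin r) = i := Fin.ext rfl
      have hleq : (⟨r - 1, Nat.sub_lt hr Nat.one_pos⟩ : Fin r) = lastr := Fin.ext rfl
      rw [hieq, hleq] at h
      linarith
  -- the last coordinate gives equal total weights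
  set kd : Fin (d + 1) := ⟨d, Nat.lt_succ_self d⟩ with hkd
  have habkd : ∀ j, ab j kd = 1 := by
    intro j; rw [hab]; exact dif_neg (lt_irrefl d)
  have hWkd : ∀ i, W i kd = ∑ j ∈ Finset.univ.filter (fun j => σ j = i), lam j := by
    intro i; rw [hW]; exact Finset.sum_congr rfl fun j _ => by rw [habkd j, mul_one]
  have hWsum : ∑ i : Fin r, W i kd = 1 := by
    rw [Finset.sum_congr rfl (fun i _ => hWkd i), Finset.sum_fiberwise]
    exact hlam1
  set τ : ℝ := W lastr kd with hτ
  have hτr : (r : ℝ) * τ = 1 := by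
    rw [← hWsum, Finset.sum_congr rfl (fun i _ => hWeq i kd)]
    simp [Finset.sum_const, Finset.card_univ, nsmul_eq_mul]
    exact Or.inl hτ
  have hτpos : 0 < τ := by
    have hrpos : (0 : ℝ) < r := by exact_mod_cast hr
    nlinarith [hτr]
  -- the parts
  set Δ : Fin r → Finset (Fin (N + 1)) :=
    fun i => Finset.univ.filter (fun j => σ j = i ∧ lam j ≠ 0) with hΔ
  have hfibsum : ∀ i, ∑ j ∈ Finset.univ.filter (fun j => σ j = i), lam j = τ := by
    intro i; rw [← hWkd i, hWeq i kd]
  have hΔne : ∀ i, (Δ i).Nonempty := by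
    intro i
    have hne : ∑ j ∈ Finset.univ.filter (fun j => σ j = i), lam j ≠ 0 := by
      rw [hfibsum i]; exact ne_of_gt hτpos
    obtain ⟨j, hj, hjne⟩ := Finset.exists_ne_zero_of_sum_ne_zero hne
    refine ⟨j, ?_⟩
    rw [hΔ]
    simp only [Finset.mem_filter]
    exact ⟨Finset.mem_univ j, (Finset.mem_filter.mp hj).2, hjne⟩
  have hΔdisj : ∀ i i'', i ≠ i'' → Disjoint (Δ i) (Δ i'') := by
    intro i i'' hne
    rw [Finset.disjoint_left]
    intro j hj hj'
    rw [hΔ, Finset.mem_filter] at hj hj'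
    exact hne (hj.2.1 ▸ hj'.2.1 ▸ rfl)
  -- the witness points
  set x : Fin r → Fin (N + 1) → ℝ := fun i j => if σ j = i then τ⁻¹ * lam j else 0 with hx
  have hxsum : ∀ i, ∑ j, x i j = 1 := by
    intro i
    rw [hx]
    rw [← Finset.sum_filter (fun j => σ j = i) (fun j => τ⁻¹ * lam j), ← Finset.mul_sum,
      hfibsum i, inv_mul_cancel₀ (ne_of_gt hτpos)]
  have hxmem : ∀ i, x i ∈ stdSimplex ℝ (Fin (N + 1)) := by
    intro i
    refine ⟨fun j => ?_, hxsum i⟩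
    rw [hx]
    by_cases h : σ j = i
    · simp only [h, if_true]
      exact mul_nonneg (inv_nonneg.mpr hτpos.le) (hlam0 j)
    · simp [h]
  have hxsupp : ∀ i, Function.support (x i) ⊆ ↑(Δ i) := by
    intro i j hj
    rw [Function.mem_support, hx] at hj
    by_cases h : σ j = i
    · have hlamne : lam j ≠ 0 := by
        intro h0; apply hj; simp [h, h0]
      rw [hΔ]
      simp only [Finset.coe_filter, Set.mem_setOf_eq]
      exact ⟨Finset.mem_univ j, h, hlamne⟩
    · exfalso; apply hj; simp [h]
  -- the common image point
  have haj : ∀ j, F (Pi.single j 1) = a j := fun j => by rw [ha]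
  have hFeq : ∀ i, F (x i) = F (x lastr) := by
    intro i
    rw [affine_eq_comb F (x i) (hxsum i), affine_eq_comb F (x lastr) (hxsum lastr)]
    have key : ∀ (i'' : Fin r) (k : Fin d) (km : Fin (d + 1)), (km : ℕ) = (k : ℕ) →
        (∑ j, x i'' j • F (Pi.single j 1)) k = τ⁻¹ * W i'' km := by
      intro i'' k km hkm
      rw [WithLp.ofLp_sum, Finset.sum_apply k Finset.univ _]
      have hkmd : (km : ℕ) < d := by rw [hkm]; exact k.isLt
      have h3 : ∀ j, ab j km = a j k := by
        intro j
        rw [hab]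
        dsimp only
        rw [dif_pos hkmd]
        exact congrArg (a j).ofLp (Fin.ext hkm)
      have h1 : ∀ j, (x i'' j • F (Pi.single j 1)) k
          = if σ j = i'' then τ⁻¹ * (lam j * ab j km) else 0 := by
        intro j
        have h2 : (x i'' j • F (Pi.single j 1)) k = x i'' j * a j k := by rw [haj j]; rfl
        rw [h2, hx, h3 j]
        by_cases h : σ j = i''
        · simp only [h, if_true]; ring
        · simp [h]
      rw [Finset.sum_congr rfl (fun j _ => h1 j), ← Finset.sum_filter, hW, Finset.mul_sum]
    refine PiLp.ext fun k => ?_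
    have hk1 : (k : ℕ) < d + 1 := by omega
    rw [key i k ⟨(k : ℕ), hk1⟩ rfl, key lastr k ⟨(k : ℕ), hk1⟩ rfl, hWeq i ⟨(k : ℕ), hk1⟩]
  -- assemble
  refine ⟨Δ, hΔne, hΔdisj,
    ⟨F (x lastr), Set.mem_iInter.mpr fun i => ?_⟩⟩
  exact ⟨⟨x i, hxmem i⟩, hxsupp i, (hFeq i)⟩
end
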